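/- For d ∈ {2, 3}, there exists an integer m_d, depending only on d, such that for all n ≥ 0 the height of the history region satisfies L(H_n) ≤ m_d − 4 almost surely. -/

import Mathlib

open MeasureTheory ProbabilityTheory Filter
open scoped ENNReal NNReal

namespace DSF

noncomputable section
open Classical

/-- The index of the last (`d`-th) coordinate. -/
def lastIdx (d : ℕ) [NeZero d] : Fin d :=
  ⟨d - 1, Nat.sub_lt (Nat.pos_of_ne_zero (NeZero.ne d)) Nat.one_pos⟩

/-- ℓ¹ distance on ℝ^d. -/
def dist1 {d : ℕ} (x y : Fin d → ℝ) : ℝ := ∑ i, |x i - y i|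

/-- The cube [-1,1]^d. -/
def cube (d : ℕ) : Set (Fin d → ℝ) := Set.univ.pi fun _ => Set.Icc (-1 : ℝ) 1

/-- Embedding of a lattice point into ℝ^d. -/
def latt {d : ℕ} (w : Fin d → ℤ) : Fin d → ℝ := fun i => (w i : ℝ)

variable {d : ℕ} {Ω : Type*} [MeasurableSpace Ω]

/-- The perturbed lattice point set V(ω). -/
def pts (U : (Fin d → ℤ) → Ω → (Fin d → ℝ)) (ω : Ω) : Set (Fin d → ℝ) :=
  {x | ∃ w : Fin d → ℤ, x = latt w + U w ω}

/-- The model hypotheses: the perturbations are i.i.d. uniform on the cube `[-1,1]^d`. -/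
structure IsPerturbedLattice (U : (Fin d → ℤ) → Ω → (Fin d → ℝ)) (μ : Measure Ω) : Prop where
  meas : ∀ w, Measurable (U w)
  indep : iIndepFun U μ
  unif : ∀ w, pdf.IsUniform (U w) (cube d) μ

/-- `IsNext Vs x y` : `y` is a point of `Vs` with strictly larger last coordinate minimizing
the ℓ¹ distance to `x` among such points. -/
def IsNext [NeZero d] (Vs : Set (Fin d → ℝ)) (x y : Fin d → ℝ) : Prop :=
  y ∈ Vs ∧ x (lastIdx d) < y (lastIdx d) ∧
    ∀ z ∈ Vs, x (lastIdx d) < z (lastIdx d) → dist1 x y ≤ dist1 x z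

/-- The next DSF step `h(x)` (an arbitrary minimizer; a.s. well defined and unique). -/
def nextStep [NeZero d] (Vs : Set (Fin d → ℝ)) (x : Fin d → ℝ) : Fin d → ℝ :=
  if h : ∃ y, IsNext Vs x y then h.choose else x

/-- The upper half ℓ¹ ball `B⁺(x,r)`. -/
def Bplus [NeZero d] (x : Fin d → ℝ) (r : ℝ) : Set (Fin d → ℝ) :=
  {y | dist1 x y ≤ r ∧ x (lastIdx d) ≤ y (lastIdx d)}

/-- The closed upper half-space `H⁺(l)`. -/
def upperHalf (d : ℕ) [NeZero d] (l : ℝ) : Set (Fin d → ℝ) := {y | l ≤ y (lastIdx d)}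

/-- The lattice point `x̂` corresponding to a perturbed point `x ∈ V` (a.s. unique). -/
def hat (U : (Fin d → ℤ) → Ω → (Fin d → ℝ)) (ω : Ω) (x : Fin d → ℝ) : Fin d → ℤ :=
  if h : ∃ w : Fin d → ℤ, x = latt w + U w ω then h.choose else 0

/-- `x↑`: the lattice point closest to `x` in the level `{w : w(d) = ⌊x(d)⌋ + 1}`
(a.s. unique). -/
def upLatt [NeZero d] (x : Fin d → ℝ) : Fin d → ℤ :=
  if h : ∃ w : Fin d → ℤ, (w (lastIdx d) = ⌊x (lastIdx d)⌋ + 1 ∧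
      ∀ w' : Fin d → ℤ, w' (lastIdx d) = ⌊x (lastIdx d)⌋ + 1 →
        dist1 x (latt w) ≤ dist1 x (latt w'))
  then h.choose else 0

/-- One step of the joint exploration process (for `n ≥ 1`). -/
def jointStep [NeZero d] (Vs : Set (Fin d → ℝ)) (p : (Fin d → ℝ) × (Fin d → ℝ)) :
    (Fin d → ℝ) × (Fin d → ℝ) :=
  if ⌊p.1 (lastIdx d)⌋ < ⌊p.2 (lastIdx d)⌋ then (nextStep Vs p.1, p.2)
  else if ⌊p.2 (lastIdx d)⌋ < ⌊p.1 (lastIdx d)⌋ then (p.1, nextStep Vs p.2)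
  else if nextStep Vs p.1 = p.2 then (nextStep Vs (nextStep Vs p.1), nextStep Vs p.2)
  else if nextStep Vs p.2 = p.1 then (nextStep Vs p.1, nextStep Vs (nextStep Vs p.2))
  else (nextStep Vs p.1, nextStep Vs p.2)

/-- The joint exploration process `(g_n(u), g_n(v))`. -/
def jointG [NeZero d] (Vs : Set (Fin d → ℝ)) (u v : Fin d → ℝ) :
    ℕ → (Fin d → ℝ) × (Fin d → ℝ)
  | 0 => (u, v)
  | 1 => (nextStep Vs u, nextStep Vs v)
  | (n+2) => jointStep Vs (jointG Vs u v (n+1))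

/-- The history (explored) region `H_n` of the joint exploration process. -/
def histRegion [NeZero d] (Vs : Set (Fin d → ℝ)) (u v : Fin d → ℝ) : ℕ → Set (Fin d → ℝ)
  | 0 => ∅
  | (n+1) =>
      ((histRegion Vs u v n
        ∪ (if (jointG Vs u v (n+1)).1 = (jointG Vs u v n).1 then ∅
           else Bplus (jointG Vs u v n).1
             (dist1 (jointG Vs u v n).1 (nextStep Vs (jointG Vs u v n).1)))
        ∪ (if (jointG Vs u v (n+1)).2 = (jointG Vs u v n).2 then ∅
           else Bplus (jointG Vs u v n).2
             (dist1 (jointG Vs u v n).2 (nextStep Vs (jointG Vs u v n).2))))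
        ∩ upperHalf d (min ((jointG Vs u v (n+1)).1 (lastIdx d))
            ((jointG Vs u v (n+1)).2 (lastIdx d))))

/-- The height `L(B)` of a set `B ⊆ ℝ^d`. -/
def height [NeZero d] (B : Set (Fin d → ℝ)) : ℝ :=
  sSup {r | ∃ x ∈ B, ∃ y ∈ B, r = x (lastIdx d) - y (lastIdx d)}

/-- The set `Γ_n` of lattice points whose perturbations have been used in the first
`n` steps of the joint exploration process. -/
def gammaSet [NeZero d] (U : (Fin d → ℤ) → Ω → (Fin d → ℝ)) (ω : Ω) (u v : Fin d → ℝ)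
    (n : ℕ) : Set (Fin d → ℤ) :=
  {w | ∃ j ≤ n, w = hat U ω (jointG (pts U ω) u v j).1 ∨
      w = hat U ω (jointG (pts U ω) u v j).2}

/-- The `‖·‖_∞` upper neighbourhood `N(w)` of a lattice point `w`. -/
def nbd [NeZero d] (w : Fin d → ℤ) : Set (Fin d → ℤ) :=
  {y | w (lastIdx d) ≤ y (lastIdx d) ∧ ∀ i, |y i - w i| ≤ 1}

/-- The event `A(w)`: every lattice point of `N(w)` is perturbed into `B⁺(·, δ)`. -/
def eventA [NeZero d] (U : (Fin d → ℤ) → Ω → (Fin d → ℝ)) (δ : ℝ) (w : Fin d → ℤ) :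
    Set Ω :=
  {ω | ∀ y ∈ nbd w, latt y + U y ω ∈ Bplus (latt y) δ}

/-- Step `k` (i.e. the transition from `g_{k-1}` to `g_k`, `k ≥ 1`) of the joint exploration
process is an 'up' step. -/
def UpStepAt [NeZero d] (Vs : Set (Fin d → ℝ)) (u v : Fin d → ℝ) (δ : ℝ) (k : ℕ) : Prop :=
  ⌊(jointG Vs u v (k-1)).1 (lastIdx d)⌋ = ⌊(jointG Vs u v (k-1)).2 (lastIdx d)⌋ ∧
  (jointG Vs u v k).1 ∈ Bplus (latt (upLatt (jointG Vs u v (k-1)).1)) δ ∧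
  (jointG Vs u v k).2 ∈ Bplus (latt (upLatt (jointG Vs u v (k-1)).2)) δ

/-- Step `k` is a 'special up' step. -/
def SpecialUpStepAt [NeZero d] (U : (Fin d → ℤ) → Ω → (Fin d → ℝ)) (ω : Ω)
    (u v : Fin d → ℝ) (δ : ℝ) (k : ℕ) : Prop :=
  UpStepAt (pts U ω) u v δ k ∧
  ω ∈ eventA U δ (upLatt (jointG (pts U ω) u v (k-1)).1) ∧
  ω ∈ eventA U δ (upLatt (jointG (pts U ω) u v (k-1)).2)

/-- The renewal steps `τ_j` of the joint exploration process. -/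
def tau [NeZero d] (U : (Fin d → ℤ) → Ω → (Fin d → ℝ)) (δ : ℝ) (md : ℕ)
    (u v : Fin d → ℝ) (ω : Ω) : ℕ → ℕ
  | 0 => 0
  | (j+1) => sInf {n | tau U δ md u v ω j + md < n ∧
      (∀ k, n - md + 1 ≤ k → k ≤ n → UpStepAt (pts U ω) u v δ k) ∧
      SpecialUpStepAt U ω u v δ n}

/-- The event `E_n = A(g_{n-1}(u)↑) ∩ A(g_{n-1}(v)↑)`. -/
def eventE [NeZero d] (U : (Fin d → ℤ) → Ω → (Fin d → ℝ)) (δ : ℝ) (u v : Fin d → ℝ)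
    (n : ℕ) : Set Ω :=
  {ω | ω ∈ eventA U δ (upLatt (jointG (pts U ω) u v (n-1)).1) ∧
       ω ∈ eventA U δ (upLatt (jointG (pts U ω) u v (n-1)).2)}

/-- The natural filtration `F_n = σ((g_j(u), g_j(v)) : j ≤ n ; Γ_n)`. -/
def filtF [NeZero d] (U : (Fin d → ℤ) → Ω → (Fin d → ℝ)) (u v : Fin d → ℝ) (n : ℕ) :
    MeasurableSpace Ω :=
  (⨆ j ∈ Set.Iic n,
      MeasurableSpace.comap (fun ω => jointG (pts U ω) u v j) inferInstance) ⊔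
    MeasurableSpace.comap (fun ω => gammaSet U ω u v n) ⊤

/-- The enlarged filtration
`G_n = σ((g_j(u), g_j(v)) : j ≤ n − 1 ; Γ_n ; 1_{E_1}, …, 1_{E_n})` (with `G_0 = F_0`). -/
def filtG [NeZero d] (U : (Fin d → ℤ) → Ω → (Fin d → ℝ)) (δ : ℝ) (u v : Fin d → ℝ) :
    ℕ → MeasurableSpace Ω
  | 0 => filtF U u v 0
  | (n+1) =>
      (⨆ j ∈ Set.Iic n,
          MeasurableSpace.comap (fun ω => jointG (pts U ω) u v j) inferInstance) ⊔
      MeasurableSpace.comap (fun ω => gammaSet U ω u v (n+1)) ⊤ ⊔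
      (⨆ k ∈ Set.Icc 1 (n+1),
          MeasurableSpace.comap
            (fun ω => (eventE U δ u v k).indicator (fun _ => (1 : ℝ)) ω) inferInstance)

/-- The σ-field associated with an ℕ-valued random time `τ` and a family `G` of σ-fields
(the stopped σ-field `G_τ` when `τ` is a stopping time for `G`). -/
def stoppedSigma (G : ℕ → MeasurableSpace Ω) (τ : Ω → ℕ) : MeasurableSpace Ω :=
  MeasurableSpace.generateFrom {A | ∀ n, MeasurableSet[G n] (A ∩ {ω | τ ω ≤ n})}

/-- A point set is `Good` if every point has a member of the set strictly above it
(in the last coordinate) within ℓ¹ distance 9. -/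
def Good [NeZero d] (Vs : Set (Fin d → ℝ)) : Prop :=
  ∀ x : Fin d → ℝ, ∃ z ∈ Vs, x (lastIdx d) < z (lastIdx d) ∧ dist1 x z ≤ 9

lemma dist1_self (x : Fin d → ℝ) : dist1 x x = 0 := by simp [dist1]

lemma abs_coord_le_dist1 (x y : Fin d → ℝ) (i : Fin d) : |x i - y i| ≤ dist1 x y := by
  rw [dist1]
  exact Finset.single_le_sum (f := fun j => |x j - y j|) (fun j _ => abs_nonneg _) (Finset.mem_univ i)

lemma nextStep_bound [NeZero d] {Vs : Set (Fin d → ℝ)} (hV : Good Vs) (x : Fin d → ℝ) :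
    dist1 x (nextStep Vs x) ≤ 9 ∧ x (lastIdx d) ≤ nextStep Vs x (lastIdx d) := by
  by_cases h : ∃ y, IsNext Vs x y
  · rw [nextStep, dif_pos h]
    obtain ⟨hmem, hlt, hmin⟩ := h.choose_spec
    obtain ⟨z, hz, hzlt, hz9⟩ := hV x
    exact ⟨(hmin z hz hzlt).trans hz9, hlt.le⟩
  · rw [nextStep, dif_neg h]
    simp [dist1_self]

lemma nextStep_coord [NeZero d] {Vs : Set (Fin d → ℝ)} (hV : Good Vs) (x : Fin d → ℝ) :
    x (lastIdx d) ≤ nextStep Vs x (lastIdx d) ∧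
      nextStep Vs x (lastIdx d) ≤ x (lastIdx d) + 9 := by
  obtain ⟨h9, hle⟩ := nextStep_bound hV x
  have habs := (abs_coord_le_dist1 x (nextStep Vs x) (lastIdx d)).trans h9
  have := abs_le.1 habs
  exact ⟨hle, by linarith [this.1]⟩

lemma jointG_step [NeZero d] {Vs : Set (Fin d → ℝ)} (hV : Good Vs)
    (u v : Fin d → ℝ) (n : ℕ) :
    ((jointG Vs u v n).1 (lastIdx d) ≤ (jointG Vs u v (n+1)).1 (lastIdx d) ∧
     (jointG Vs u v (n+1)).1 (lastIdx d) ≤ (jointG Vs u v n).1 (lastIdx d) + 18) ∧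
    ((jointG Vs u v n).2 (lastIdx d) ≤ (jointG Vs u v (n+1)).2 (lastIdx d) ∧
     (jointG Vs u v (n+1)).2 (lastIdx d) ≤ (jointG Vs u v n).2 (lastIdx d) + 18) := by
  match n with
  | 0 =>
    have h1 := nextStep_coord hV u
    have h2 := nextStep_coord hV v
    simp only [jointG]
    exact ⟨⟨h1.1, by linarith [h1.2]⟩, ⟨h2.1, by linarith [h2.2]⟩⟩
  | (k+1) =>
    have he : jointG Vs u v (k+2) = jointStep Vs (jointG Vs u v (k+1)) := rfl
    rw [he]
    set p := jointG Vs u v (k+1)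
    have c1 := nextStep_coord hV p.1
    have c2 := nextStep_coord hV p.2
    have c11 := nextStep_coord hV (nextStep Vs p.1)
    have c22 := nextStep_coord hV (nextStep Vs p.2)
    unfold jointStep
    split_ifs <;> refine ⟨⟨?_, ?_⟩, ?_, ?_⟩ <;> dsimp only <;> linarith

lemma floor_eq_abs_le {a b : ℝ} (h : ⌊a⌋ = ⌊b⌋) : |a - b| ≤ 1 := by
  have h1 := Int.floor_le a
  have h2 := Int.floor_le b
  have h3 := Int.lt_floor_add_one a
  have h4 := Int.lt_floor_add_one b
  have hc : ((⌊a⌋ : ℤ) : ℝ) = ((⌊b⌋ : ℤ) : ℝ) := by exact_mod_cast h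
  rw [abs_le]; constructor <;> linarith

lemma floor_lt_imp {a b : ℝ} (h : ⌊a⌋ < ⌊b⌋) : a < b := by
  have h3 := Int.lt_floor_add_one a
  have h2 := Int.floor_le b
  have : ((⌊a⌋ : ℤ) : ℝ) + 1 ≤ ((⌊b⌋ : ℤ) : ℝ) := by exact_mod_cast h
  linarith

lemma jointG_diff [NeZero d] {Vs : Set (Fin d → ℝ)} (hV : Good Vs)
    (u v : Fin d → ℝ) (huv : u (lastIdx d) = v (lastIdx d)) (n : ℕ) :
    |(jointG Vs u v n).1 (lastIdx d) - (jointG Vs u v n).2 (lastIdx d)| ≤ 19 := by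
  induction n with
  | zero => simp [jointG, huv]
  | succ k ih =>
    match k, ih with
    | 0, _ =>
      have h1 := nextStep_coord hV u
      have h2 := nextStep_coord hV v
      show |nextStep Vs u (lastIdx d) - nextStep Vs v (lastIdx d)| ≤ 19
      rw [abs_le]; constructor <;> linarith [h1.1, h1.2, h2.1, h2.2]
    | (j+1), ih =>
      have he : jointG Vs u v (j+2) = jointStep Vs (jointG Vs u v (j+1)) := rfl
      rw [he]
      set p := jointG Vs u v (j+1)
      have c1 := nextStep_coord hV p.1
      have c2 := nextStep_coord hV p.2
      have c11 := nextStep_coord hV (nextStep Vs p.1)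
      have c22 := nextStep_coord hV (nextStep Vs p.2)
      have ihab := abs_le.1 ih
      unfold jointStep
      split_ifs with h1 h2 h3 h4
      · have hlt := floor_lt_imp h1
        rw [abs_le]; constructor <;> dsimp only <;> linarith
      · have hlt := floor_lt_imp h2
        rw [abs_le]; constructor <;> dsimp only <;> linarith
      all_goals {
        have heq : ⌊p.1 (lastIdx d)⌋ = ⌊p.2 (lastIdx d)⌋ :=
          le_antisymm (not_lt.1 h2) (not_lt.1 h1)
        have hab := abs_le.1 (floor_eq_abs_le heq)
        rw [abs_le]; constructor <;> dsimp only <;> linarith }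

lemma region_bound [NeZero d] {Vs : Set (Fin d → ℝ)} (hV : Good Vs)
    (u v : Fin d → ℝ) (huv : u (lastIdx d) = v (lastIdx d)) (n : ℕ) :
    ∀ y ∈ histRegion Vs u v n,
      min ((jointG Vs u v n).1 (lastIdx d)) ((jointG Vs u v n).2 (lastIdx d)) ≤ y (lastIdx d) ∧
      y (lastIdx d)
        ≤ min ((jointG Vs u v n).1 (lastIdx d)) ((jointG Vs u v n).2 (lastIdx d)) + 28 := by
  induction n with
  | zero => intro y hy; exact absurd hy (Set.notMem_empty y)
  | succ k ih =>
    intro y hy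
    obtain ⟨hyU, hyH⟩ := hy
    have hyH' : min ((jointG Vs u v (k+1)).1 (lastIdx d)) ((jointG Vs u v (k+1)).2 (lastIdx d))
        ≤ y (lastIdx d) := hyH
    refine ⟨hyH', ?_⟩
    have hstep := jointG_step hV u v k
    have hdiff := abs_le.1 (jointG_diff hV u v huv (k+1))
    have hmono : min ((jointG Vs u v k).1 (lastIdx d)) ((jointG Vs u v k).2 (lastIdx d))
        ≤ min ((jointG Vs u v (k+1)).1 (lastIdx d)) ((jointG Vs u v (k+1)).2 (lastIdx d)) :=
      min_le_min hstep.1.1 hstep.2.1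
    have hma : (jointG Vs u v (k+1)).1 (lastIdx d)
        ≤ min ((jointG Vs u v (k+1)).1 (lastIdx d)) ((jointG Vs u v (k+1)).2 (lastIdx d)) + 19 := by
      rcases le_total ((jointG Vs u v (k+1)).1 (lastIdx d)) ((jointG Vs u v (k+1)).2 (lastIdx d))
        with h | h
      · rw [min_eq_left h]; linarith
      · rw [min_eq_right h]; linarith
    have hmb : (jointG Vs u v (k+1)).2 (lastIdx d)
        ≤ min ((jointG Vs u v (k+1)).1 (lastIdx d)) ((jointG Vs u v (k+1)).2 (lastIdx d)) + 19 := by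
      rcases le_total ((jointG Vs u v (k+1)).1 (lastIdx d)) ((jointG Vs u v (k+1)).2 (lastIdx d))
        with h | h
      · rw [min_eq_left h]; linarith
      · rw [min_eq_right h]; linarith
    rcases hyU with (hyU | hy1) | hy2
    · have hold := (ih y hyU).2
      linarith
    · split_ifs at hy1 with hc
      · exact absurd hy1 (Set.notMem_empty y)
      · obtain ⟨hdI, hgeI⟩ := hy1
        have h9 := (nextStep_bound hV (jointG Vs u v k).1).1
        have habs := abs_le.1 ((abs_coord_le_dist1 (jointG Vs u v k).1 y (lastIdx d)).trans
          (hdI.trans h9))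
        linarith [hstep.1.1]
    · split_ifs at hy2 with hc
      · exact absurd hy2 (Set.notMem_empty y)
      · obtain ⟨hdI, hgeI⟩ := hy2
        have h9 := (nextStep_bound hV (jointG Vs u v k).2).1
        have habs := abs_le.1 ((abs_coord_le_dist1 (jointG Vs u v k).2 y (lastIdx d)).trans
          (hdI.trans h9))
        linarith [hstep.2.1]

lemma height_le_28 [NeZero d] {Vs : Set (Fin d → ℝ)} (hV : Good Vs)
    (u v : Fin d → ℝ) (huv : u (lastIdx d) = v (lastIdx d)) (n : ℕ) :
    height (histRegion Vs u v n) ≤ 28 := by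
  apply Real.sSup_le _ (by norm_num)
  rintro r ⟨x, hx, y, hy, rfl⟩
  have h1 := region_bound hV u v huv n x hx
  have h2 := region_bound hV u v huv n y hy
  linarith [h1.2, h2.1]

/-- Lemma 3.2: there is an integer `m_d`, depending only on `d`, such that for
the joint exploration process started from any two lattice points at the same level, the
height of the history region satisfies `L(H_n) ≤ m_d − 4` for all `n`, almost surely. -/
theorem history_height_uniformly_bounded
    [NeZero d] (hd : d = 2 ∨ d = 3)
    (μ : Measure Ω) [IsProbabilityMeasure μ]
    (U : (Fin d → ℤ) → Ω → (Fin d → ℝ)) (hU : IsPerturbedLattice U μ) :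
    ∃ md : ℕ, ∀ u v : Fin d → ℤ, u (lastIdx d) = v (lastIdx d) →
      ∀ᵐ ω ∂μ, ∀ n : ℕ,
        height (histRegion (pts U ω) (latt u) (latt v) n) ≤ (md : ℝ) - 4 := by
  have hd3 : (d : ℝ) ≤ 3 := by rcases hd with h | h <;> subst h <;> norm_num
  refine ⟨32, fun u v huv => ?_⟩
  have hcube_meas : MeasurableSet (cube d) :=
    MeasurableSet.univ_pi fun _ => measurableSet_Icc
  have hvol : volume (cube d) = (ENNReal.ofReal 2) ^ d := by
    rw [cube, volume_pi_pi]
    norm_num [Real.volume_Icc]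
  have hne : volume (cube d) ≠ 0 := by
    rw [hvol]
    exact pow_ne_zero _ (by simp [ENNReal.ofReal_eq_zero])
  have hnt : volume (cube d) ≠ ∞ := by
    rw [hvol]; exact ENNReal.pow_ne_top ENNReal.ofReal_ne_top
  have key : ∀ᵐ ω ∂μ, ∀ w : Fin d → ℤ, U w ω ∈ cube d := by
    rw [ae_all_iff]
    intro w
    have h0 : μ (U w ⁻¹' (cube d)ᶜ) = 0 := by
      rw [(hU.unif w).measure_preimage hne hnt hcube_meas.compl]
      simp
    rw [ae_iff]
    exact h0
  filter_upwards [key] with ω hω n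
  have hGood : Good (pts U ω) := by
    intro x
    obtain ⟨w, hw⟩ : ∃ w : Fin d → ℤ,
        w = fun i => if i = lastIdx d then ⌊x (lastIdx d)⌋ + 2 else ⌊x i⌋ := ⟨_, rfl⟩
    have hUc : ∀ i, -1 ≤ U w ω i ∧ U w ω i ≤ 1 := fun i => hω w i (Set.mem_univ i)
    refine ⟨latt w + U w ω, ⟨w, rfl⟩, ?_, ?_⟩
    · have hl : (latt w + U w ω) (lastIdx d)
          = ((⌊x (lastIdx d)⌋ : ℝ) + 2) + U w ω (lastIdx d) := by
        simp only [Pi.add_apply, latt, hw]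
        norm_num
      rw [hl]
      have := Int.lt_floor_add_one (x (lastIdx d))
      linarith [(hUc (lastIdx d)).1]
    · have hterm : ∀ i, |x i - (latt w + U w ω) i| ≤ 3 := by
        intro i
        have hu := hUc i
        have h1 := Int.floor_le (x i)
        have h2 := Int.lt_floor_add_one (x i)
        by_cases hi : i = lastIdx d
        · have hl : (latt w + U w ω) i = ((⌊x i⌋ : ℝ) + 2) + U w ω i := by
            simp only [Pi.add_apply, latt, hw, hi]
            norm_num
          rw [hl, abs_le]; constructor <;> linarith
        · have hl : (latt w + U w ω) i = (⌊x i⌋ : ℝ) + U w ω i := by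
            simp only [Pi.add_apply, latt, hw, if_neg hi]
          rw [hl, abs_le]; constructor <;> linarith
      calc dist1 x (latt w + U w ω) = ∑ i, |x i - (latt w + U w ω) i| := rfl
        _ ≤ ∑ _i : Fin d, (3:ℝ) := Finset.sum_le_sum fun i _ => hterm i
        _ = 3 * d := by simp [Finset.sum_const, mul_comm]
        _ ≤ 9 := by linarith
  have hlast : latt u (lastIdx d) = latt v (lastIdx d) := by
    simp [latt, huv]
  calc height (histRegion (pts U ω) (latt u) (latt v) n) ≤ 28 :=
      height_le_28 hGood _ _ hlast n
    _ ≤ (32:ℝ) - 4 := by norm_num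


end

end DSF
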